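/- Let F : ℝⁿ × ℝᵏ → ℝ be a differentiable generating function with contour L_F ⊆ J¹(ℝⁿ,ℝ). Then T(L_F) is the contour of the generating function F_T : ℝⁿ × (ℝⁿ × ℝᵏ) → ℝ defined by F_T(q,(v,w)) := ⟨q,v⟩ − F(v,w), with base variable q and fiber variables (v,w); that is, T(L_F) = L_{F_T}. -/

import Mathlib

noncomputable section

/-- The transformation T(u,q,p) = (⟨q,p⟩ − u, p, q) on J¹(ℝⁿ,ℝ) = ℝ × ℝⁿ × ℝⁿ. -/
def Tmap {E : Type*} [NormedAddCommGroup E] [InnerProductSpace ℝ E]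
    (x : ℝ × E × E) : ℝ × E × E :=
  ((inner ℝ x.2.1 x.2.2 : ℝ) - x.1, x.2.2, x.2.1)

/-- The contour L_F of a generating function F : ℝⁿ × ℝᵏ → ℝ with base variable q and
fiber variable w: L_F = {(F(q,w), q, ∇_q F(q,w)) | ∇_w F(q,w) = 0}. -/
def gfContour {n k : ℕ}
    (F : EuclideanSpace ℝ (Fin n) × EuclideanSpace ℝ (Fin k) → ℝ) :
    Set (ℝ × EuclideanSpace ℝ (Fin n) × EuclideanSpace ℝ (Fin n)) :=
  {x | ∃ q w, gradient (fun w' => F (q, w')) w = 0 ∧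
    x = (F (q, w), q, gradient (fun q' => F (q', w)) q)}

/-- The contour of a generating function F : ℝⁿ × (ℝᵐ × ℝᵏ) → ℝ with base variable q
and fiber variables (v,w): the fiber gradient vanishes iff both partial fiber
gradients vanish. -/
def gfContour2 {n m k : ℕ}
    (F : EuclideanSpace ℝ (Fin n) × (EuclideanSpace ℝ (Fin m) × EuclideanSpace ℝ (Fin k)) → ℝ) :
    Set (ℝ × EuclideanSpace ℝ (Fin n) × EuclideanSpace ℝ (Fin n)) :=
  {x | ∃ q v w, gradient (fun v' => F (q, (v', w))) v = 0 ∧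
    gradient (fun w' => F (q, (v, w'))) w = 0 ∧
    x = (F (q, (v, w)), q, gradient (fun q' => F (q', (v, w))) q)}

section helpers
variable {E : Type*} [NormedAddCommGroup E] [InnerProductSpace ℝ E] [CompleteSpace E]

lemma hasGradientAt_inner_right' (v x : E) :
    HasGradientAt (fun y => (inner ℝ y v : ℝ)) v x := by
  rw [hasGradientAt_iff_hasFDerivAt]
  have : (fun y : E => (inner ℝ y v : ℝ)) = fun y => (InnerProductSpace.toDual ℝ E v) y := by
    funext y
    simp [InnerProductSpace.toDual_apply_apply, real_inner_comm]
  rw [this]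
  exact (InnerProductSpace.toDual ℝ E v).hasFDerivAt

lemma hasGradientAt_inner_left' (v x : E) :
    HasGradientAt (fun y => (inner ℝ v y : ℝ)) v x := by
  have : (fun y : E => (inner ℝ v y : ℝ)) = fun y => (inner ℝ y v : ℝ) := by
    funext y; exact real_inner_comm _ _
  rw [this]
  exact hasGradientAt_inner_right' v x

lemma HasGradientAt.sub' {f g : E → ℝ} {f' g' x : E}
    (hf : HasGradientAt f f' x) (hg : HasGradientAt g g' x) :
    HasGradientAt (fun y => f y - g y) (f' - g') x := by
  rw [hasGradientAt_iff_hasFDerivAt] at *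
  have := hf.sub hg
  rw [map_sub]; exact this

end helpers

/-- If F : ℝⁿ × ℝᵏ → ℝ is a differentiable generating function, then T(L_F) is the
contour of F_T(q,(v,w)) = ⟨q,v⟩ − F(v,w), with base variable q and fiber
variables (v,w): T(L_F) = L_{F_T}. -/
theorem stmt12 (n k : ℕ)
    (F : EuclideanSpace ℝ (Fin n) × EuclideanSpace ℝ (Fin k) → ℝ)
    (hF : Differentiable ℝ F) :
    Tmap '' (gfContour F)
      = gfContour2 (fun x => (inner ℝ x.1 x.2.1 : ℝ) - F (x.2.1, x.2.2)) := by
  have hd1 : ∀ (v : EuclideanSpace ℝ (Fin n)) (w : EuclideanSpace ℝ (Fin k)),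
      DifferentiableAt ℝ (fun v' => F (v', w)) v := fun v w =>
    (hF _).comp v ((differentiableAt_id.prodMk (differentiableAt_const _)))
  have hd2 : ∀ (v : EuclideanSpace ℝ (Fin n)) (w : EuclideanSpace ℝ (Fin k)),
      DifferentiableAt ℝ (fun w' => F (v, w')) w := fun v w =>
    (hF _).comp w (((differentiableAt_const _).prodMk differentiableAt_id))
  have gq : ∀ (q v : EuclideanSpace ℝ (Fin n)) (w : EuclideanSpace ℝ (Fin k)),
      gradient (fun q' => (inner ℝ q' v : ℝ) - F (v, w)) q = v := by
    intro q v w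
    have := (hasGradientAt_inner_right' v q).sub' (hasGradientAt_const q (F (v, w)))
    simpa using this.gradient
  have gv : ∀ (q v : EuclideanSpace ℝ (Fin n)) (w : EuclideanSpace ℝ (Fin k)),
      gradient (fun v' => (inner ℝ q v' : ℝ) - F (v', w)) v
        = q - gradient (fun v' => F (v', w)) v := by
    intro q v w
    exact ((hasGradientAt_inner_left' q v).sub' (hd1 v w).hasGradientAt).gradient
  have gw : ∀ (q v : EuclideanSpace ℝ (Fin n)) (w : EuclideanSpace ℝ (Fin k)),
      gradient (fun w' => (inner ℝ q v : ℝ) - F (v, w')) w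
        = - gradient (fun w' => F (v, w')) w := by
    intro q v w
    have := (hasGradientAt_const w ((inner ℝ q v : ℝ))).sub' (hd2 v w).hasGradientAt
    simpa using this.gradient
  ext x
  constructor
  · rintro ⟨y, ⟨v, w, hw, rfl⟩, rfl⟩
    refine ⟨gradient (fun q' => F (q', w)) v, v, w, ?_, ?_, ?_⟩
    · rw [gv]; simp
    · rw [gw, hw, neg_zero]
    · simp only [Tmap, gq]
      congr 1
      rw [real_inner_comm]
  · rintro ⟨q, v, w, h1, h2, rfl⟩
    rw [gv, sub_eq_zero] at h1
    rw [gw, neg_eq_zero] at h2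
    refine ⟨(F (v, w), v, gradient (fun q' => F (q', w)) v), ⟨v, w, h2, rfl⟩, ?_⟩
    simp only [Tmap, gq, ← h1]
    congr 1
    rw [real_inner_comm]
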